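/- A point z ∈ Δ satisfies F(z) = 0 if and only if there exists a nonempty subset S ⊆ {1,…,d} such that z_i = 1/|S| for i ∈ S and z_i = 0 for i ∉ S. -/

import Mathlib

open Finset

theorem equilibria_characterization (d : ℕ) (hd : 2 ≤ d) (α : ℝ) (hα : 1 < α)
    (z : Fin d → ℝ) (hz0 : ∀ i, 0 ≤ z i) (hz1 : ∑ i, z i = 1) :
    (fun i : Fin d => -(z i) + z i ^ α / (∑ j, z j ^ α)) = 0 ↔
      ∃ S : Finset (Fin d), S.Nonempty ∧
        ∀ i, z i = if i ∈ S then (1 : ℝ) / S.card else 0 := by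
  have hα0 : α ≠ 0 := by linarith
  have hexp : (0:ℝ) < α - 1 := by linarith
  have inj : ∀ x y : ℝ, 0 ≤ x → 0 ≤ y → x ^ (α-1) = y ^ (α-1) → x = y := by
    intro x y hx hy h
    rcases lt_trichotomy x y with hlt | heq | hgt
    · exact absurd h (ne_of_lt (Real.rpow_lt_rpow hx hlt hexp))
    · exact heq
    · exact absurd h.symm (ne_of_lt (Real.rpow_lt_rpow hy hgt hexp))
  constructor
  · intro h
    obtain ⟨i0, hi0⟩ : ∃ i, 0 < z i := by
      by_contra hc
      push_neg at hc
      have : ∀ i, z i = 0 := fun i => le_antisymm (hc i) (hz0 i)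
      simp [this] at hz1
    have hT : 0 < ∑ j, z j ^ α := by
      apply Finset.sum_pos'
      · intro i _; exact Real.rpow_nonneg (hz0 i) α
      · exact ⟨i0, Finset.mem_univ i0, Real.rpow_pos_of_pos hi0 α⟩
    have h' : ∀ i, z i ^ α = z i * (∑ j, z j ^ α) := by
      intro i
      have := congrFun h i
      simp only [Pi.zero_apply] at this
      have h2 : z i ^ α / (∑ j, z j ^ α) = z i := by linarith
      field_simp at h2
      linarith [h2]
    set S : Finset (Fin d) := Finset.univ.filter (fun i => z i ≠ 0) with hSdef
    have hmemS : ∀ i, i ∈ S ↔ z i ≠ 0 := by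
      intro i; simp [hSdef]
    have hSne : S.Nonempty := ⟨i0, (hmemS i0).mpr (ne_of_gt hi0)⟩
    have hconst : ∀ i ∈ S, z i ^ (α - 1) = ∑ j, z j ^ α := by
      intro i hi
      have hzi : 0 < z i := lt_of_le_of_ne (hz0 i) (Ne.symm ((hmemS i).mp hi))
      have hsplit : z i ^ α = z i ^ (α - 1) * z i := by
        rw [← Real.rpow_add_one (ne_of_gt hzi)]
        ring_nf
      have := h' i
      rw [hsplit] at this
      have := mul_right_cancel₀ (ne_of_gt hzi) (by linarith [this] : z i ^ (α-1) * z i = (∑ j, z j ^ α) * z i)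
      exact this
    have heq : ∀ i ∈ S, z i = z i0 := by
      intro i hi
      exact inj _ _ (hz0 i) (hz0 i0)
        ((hconst i hi).trans (hconst i0 ((hmemS i0).mpr (ne_of_gt hi0))).symm)
    have hsumS : ∑ i ∈ S, z i = 1 := by
      rw [← hz1]
      apply Finset.sum_subset (Finset.subset_univ S)
      intro x _ hx
      by_contra hne
      exact hx ((hmemS x).mpr hne)
    have hcard : (S.card : ℝ) * z i0 = 1 := by
      rw [← hsumS, Finset.sum_congr rfl heq, Finset.sum_const, nsmul_eq_mul]
    have hcardpos : (0:ℝ) < S.card := by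
      exact_mod_cast Finset.card_pos.mpr hSne
    have hzi0 : z i0 = 1 / S.card := by
      rw [eq_div_iff (ne_of_gt hcardpos)]
      linarith [hcard]
    refine ⟨S, hSne, fun i => ?_⟩
    by_cases hi : i ∈ S
    · simp [hi, (heq i hi).trans hzi0]
    · simp only [hi, if_false]
      by_contra hne
      exact hi ((hmemS i).mpr hne)
  · rintro ⟨S, hSne, hzS⟩
    have hcardpos : (0:ℝ) < S.card := by
      exact_mod_cast Finset.card_pos.mpr hSne
    have hc : (0:ℝ) < 1 / S.card := by positivity
    have hT : (∑ j, z j ^ α) = S.card * ((1:ℝ)/S.card) ^ α := by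
      rw [← Finset.sum_subset (Finset.subset_univ S)
        (by intro x _ hx; rw [hzS x, if_neg hx, Real.zero_rpow hα0])]
      rw [Finset.sum_congr rfl (fun j hj => by rw [hzS j, if_pos hj]),
        Finset.sum_const, nsmul_eq_mul]
    have hcα : (0:ℝ) < ((1:ℝ)/S.card) ^ α := Real.rpow_pos_of_pos hc α
    funext i
    simp only [Pi.zero_apply]
    rw [hzS i, hT]
    by_cases hi : i ∈ S
    · rw [if_pos hi]
      field_simp
      ring
    · rw [if_neg hi, Real.zero_rpow hα0]
      simp
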